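/- Synchronization lemma: let w be a factor of u^{(h)} containing 10 as a factor. Then there exist unique letters x, y ∈ {0,1}, a word v, a non-empty suffix s of σ_h(x), and a non-empty prefix p of σ_h(y), such that xvy is a factor of u^{(h+1)} and w = s σ_h(v) p. -/

import Mathlib

/-- The `k`-th power of a finite word `w` (concatenation of `k` copies). -/
def wpow (w : List Bool) (k : ℕ) : List Bool := (List.replicate k w).flatten

/-- The pair of words `(u_i, v_i)`:  `u_0 = 0`, `v_0 = 1`,
`u_{i+1} = u_i^{m_i} v_i^{l_i}`, `v_{i+1} = u_i^{m_i} v_i^{n_i}`. -/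
def uvSeq (l m n : ℕ → ℕ) : ℕ → List Bool × List Bool
  | 0 => ([false], [true])
  | i + 1 =>
      (wpow (uvSeq l m n i).1 (m i) ++ wpow (uvSeq l m n i).2 (l i),
       wpow (uvSeq l m n i).1 (m i) ++ wpow (uvSeq l m n i).2 (n i))

/-- The substitution `σ_h` : `0 ↦ 0^{m_h} 1^{l_h}`, `1 ↦ 0^{m_h} 1^{n_h}`. -/
def subw (l m n : ℕ → ℕ) (h : ℕ) (w : List Bool) : List Bool :=
  w.flatMap fun c => List.replicate (m h) false ++ List.replicate (if c then n h else l h) true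

/-- `wordIter i h = σ_h σ_{h+1} ⋯ σ_{h+i-1}(0)`. -/
def wordIter (l m n : ℕ → ℕ) : ℕ → ℕ → List Bool
  | 0, _ => [false]
  | i + 1, h => subw l m n h (wordIter l m n i (h + 1))

/-- The infinite word `u^{(h)} = lim_i σ_h ⋯ σ_{h+i-1}(0)`. -/
def limWord (l m n : ℕ → ℕ) (h : ℕ) (k : ℕ) : Bool :=
  (wordIter l m n (k + 1) h).getD k false

/-- `w` is a factor of the infinite word `U`. -/
def IsFactor (U : ℕ → Bool) (w : List Bool) : Prop :=
  ∃ k, w = (List.range w.length).map fun j => U (k + j)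

/-- `σ_0 σ_1 ⋯ σ_{h+i-1}` starting at `h`, applied to `w`. -/
def subComp (l m n : ℕ → ℕ) : ℕ → ℕ → List Bool → List Bool
  | 0, _, w => w
  | i + 1, h, w => subw l m n h (subComp l m n i (h + 1) w)

/-- `\hat{σ}_h(w) = 1^{l_h} σ_h(w) 0^{m_h} 1^{l_h}`. -/
def hatw (l m n : ℕ → ℕ) (h : ℕ) (w : List Bool) : List Bool :=
  List.replicate (l h) true ++ subw l m n h w ++
    List.replicate (m h) false ++ List.replicate (l h) true

/-- `hatComp i h w = \hat{σ}_h ⋯ \hat{σ}_{h+i-1}(w)`. -/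
def hatComp (l m n : ℕ → ℕ) : ℕ → ℕ → List Bool → List Bool
  | 0, _, w => w
  | i + 1, h, w => hatw l m n h (hatComp l m n i (h + 1) w)

/-- The complexity function of the infinite word `U`. -/
noncomputable def complexityFn (U : ℕ → Bool) (nn : ℕ) : ℕ :=
  Set.ncard {w : List Bool | w.length = nn ∧ IsFactor U w}

namespace S15

def Chunk (A : List Bool) : Prop :=
  ∃ a b : ℕ, 0 < b ∧ A = List.replicate a false ++ List.replicate b true

def blk (l m n : ℕ → ℕ) (h : ℕ) (c : Bool) : List Bool :=
  List.replicate (m h) false ++ List.replicate (if c then n h else l h) true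

variable (l m n : ℕ → ℕ) (h : ℕ)

lemma subw_nil : subw l m n h [] = [] := rfl

lemma subw_cons (c : Bool) (v : List Bool) :
    subw l m n h (c :: v) = blk l m n h c ++ subw l m n h v := by
  simp [subw, blk]

lemma subw_singleton (c : Bool) : subw l m n h [c] = blk l m n h c := by
  simp [subw, blk]

lemma subw_append (u v : List Bool) :
    subw l m n h (u ++ v) = subw l m n h u ++ subw l m n h v := by
  simp [subw]

lemma getD_chunk (a b i : ℕ) (hi : i < a + b) :
    (List.replicate a false ++ List.replicate b true).getD i false = decide (a ≤ i) := by
  rcases lt_or_ge i a with h1 | h1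
  · rw [List.getD_append _ _ _ _ (by simpa using h1)]
    simp [List.getD_eq_getElem?_getD, List.getElem?_replicate, h1, Nat.not_le.mpr h1]
  · rw [List.getD_append_right _ _ _ _ (by simpa using h1)]
    have h2 : i - a < b := by omega
    simp [List.getD_eq_getElem?_getD, List.getElem?_replicate, h2, h1]

lemma noTF_chunk {A : List Bool} (hA : Chunk A) : ¬ [true, false] <:+: A := by
  obtain ⟨a, b, hb, rfl⟩ := hA
  rintro ⟨s, t, hst⟩
  have hst' : s ++ ([true, false] ++ t) = List.replicate a false ++ List.replicate b true := by
    rw [← hst, List.append_assoc]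
  have hlen : s.length + 2 + t.length = a + b := by
    have := congrArg List.length hst'; simp at this; omega
  have h1 : (List.replicate a false ++ List.replicate b true).getD s.length false = true := by
    rw [← hst', List.getD_append_right _ _ _ _ le_rfl]
    simp
  have h2 : (List.replicate a false ++ List.replicate b true).getD (s.length + 1) false
      = false := by
    rw [← hst', List.getD_append_right _ _ _ _ (by omega)]
    have he1 : s.length + 1 - s.length = 1 := by omega
    rw [he1]
    simp
  rw [getD_chunk a b _ (by omega)] at h1
  rw [getD_chunk a b _ (by omega)] at h2
  simp only [decide_eq_true_eq] at h1
  simp only [decide_eq_false_iff_not, Nat.not_le] at h2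
  omega

lemma cancel_lt {A A' B B' : List Bool} (hA : Chunk A) (hA' : Chunk A')
    (he : A ++ B = A' ++ B') (hB : B.head? = some false) :
    ¬ A.length < A'.length := by
  intro hlt
  obtain ⟨a, b, hb, rfl⟩ := hA
  obtain ⟨a', b', hb', rfl⟩ := hA'
  obtain ⟨c, B2, rfl⟩ : ∃ c B2, B = c :: B2 := by
    cases B with
    | nil => simp at hB
    | cons c B2 => exact ⟨c, B2, rfl⟩
  have hc : c = false := by simpa using hB
  subst hc
  simp only [List.length_append, List.length_replicate] at hlt
  have c1 : ((List.replicate a false ++ List.replicate b true) ++ false :: B2).getD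
      (a + b - 1) false = true := by
    rw [List.getD_append _ _ _ _ (by simp; omega), getD_chunk a b _ (by omega)]
    simp only [decide_eq_true_eq]
    omega
  have c2 : ((List.replicate a false ++ List.replicate b true) ++ false :: B2).getD
      (a + b) false = false := by
    rw [List.getD_append_right _ _ _ _ (by simp)]
    simp
  rw [he] at c1 c2
  rw [List.getD_append _ _ _ _ (by simp; omega), getD_chunk a' b' _ (by omega)] at c1
  rw [List.getD_append _ _ _ _ (by simp; omega), getD_chunk a' b' _ (by omega)] at c2
  simp only [decide_eq_true_eq] at c1
  simp only [decide_eq_false_iff_not, Nat.not_le] at c2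
  omega

lemma cancel {A A' B B' : List Bool} (hA : Chunk A) (hA' : Chunk A')
    (he : A ++ B = A' ++ B') (hB : B.head? = some false) (hB' : B'.head? = some false) :
    A = A' ∧ B = B' := by
  have h1 := cancel_lt hA hA' he hB
  have h2 := cancel_lt hA' hA he.symm hB'
  exact List.append_inj he (by omega)

lemma chunk_append_tf {A B : List Bool} (hA : Chunk A) (hB : B.head? = some false) :
    [true, false] <:+: A ++ B := by
  obtain ⟨a, b, hb, rfl⟩ := hA
  obtain ⟨c, B2, rfl⟩ : ∃ c B2, B = c :: B2 := by
    cases B with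
    | nil => simp at hB
    | cons c B2 => exact ⟨c, B2, rfl⟩
  have hc : c = false := by simpa using hB
  subst hc
  obtain ⟨b2, rfl⟩ : ∃ b2, b = b2 + 1 := ⟨b - 1, by omega⟩
  refine ⟨List.replicate a false ++ List.replicate b2 true, B2, ?_⟩
  simp [List.replicate_succ' (n := b2)]

lemma chunk_suffix {A s : List Bool} (hA : Chunk A) (hs : s <:+ A) (hne : s ≠ []) :
    Chunk s := by
  obtain ⟨t, ht⟩ := hs
  obtain ⟨a, b, hb, hAe⟩ := hA
  have hlen : t.length + s.length = a + b := by
    have := congrArg List.length ht; simp [hAe] at this; omega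
  have hslen : 0 < s.length := List.length_pos_iff.mpr hne
  have hseq : s = List.drop t.length (List.replicate a false ++ List.replicate b true) := by
    rw [← hAe, ← ht, List.drop_left]
  rw [List.drop_append, List.drop_replicate, List.drop_replicate] at hseq
  exact ⟨a - t.length, b - (t.length - (List.replicate a false).length), by simp; omega, hseq⟩

lemma chunk_blk (hl : 0 < l h) (hn : 0 < n h) (c : Bool) : Chunk (blk l m n h c) :=
  ⟨m h, if c then n h else l h, by cases c <;> simpa, rfl⟩

lemma head?_blk (hm : 0 < m h) (c : Bool) : (blk l m n h c).head? = some false := by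
  obtain ⟨k, hk⟩ : ∃ k, m h = k + 1 := ⟨m h - 1, by omega⟩
  simp [blk, hk, List.replicate_succ]

lemma head?_prefix_blk (hm : 0 < m h) {p : List Bool} {c : Bool}
    (hp : p <+: blk l m n h c) (hne : p ≠ []) : p.head? = some false := by
  obtain ⟨t, ht⟩ := hp
  cases p with
  | nil => exact absurd rfl hne
  | cons d p' =>
    have := head?_blk l m n h hm c
    rw [← ht] at this
    simpa using this

lemma noTF_prefix_blk (hl : 0 < l h) (hn : 0 < n h) {p : List Bool} {c : Bool}
    (hp : p <+: blk l m n h c) : ¬ [true, false] <:+: p := fun hTF =>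
  noTF_chunk (chunk_blk l m n h hl hn c) (hTF.trans hp.isInfix)

lemma head?_subw_app (hm : 0 < m h) {v p : List Bool} {y : Bool}
    (hp : p ≠ []) (hpy : p <+: blk l m n h y) :
    (subw l m n h v ++ p).head? = some false := by
  cases v with
  | nil => simpa [subw] using head?_prefix_blk l m n h hm hpy hp
  | cons c v' =>
    rw [subw_cons, List.append_assoc, List.head?_append, head?_blk l m n h hm c]
    rfl

lemma blk_eq_blk (hlm : l h < m h) (hmn : m h < n h) {c c' : Bool}
    (he : blk l m n h c = blk l m n h c') : c = c' := by
  have := congrArg List.length he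
  cases c <;> cases c' <;> simp [blk] at this ⊢ <;> omega

lemma uniq2 (hl : 0 < l h) (hlm : l h < m h) (hmn : m h < n h) :
    ∀ v v' p p' : List Bool, ∀ y y' : Bool,
      subw l m n h v ++ p = subw l m n h v' ++ p' →
      p ≠ [] → p <+: blk l m n h y → p' ≠ [] → p' <+: blk l m n h y' →
      v = v' ∧ p = p' := by
  have hm : 0 < m h := hl.trans hlm
  have hn : 0 < n h := hm.trans hmn
  intro v
  induction v with
  | nil =>
    intro v' p p' y y' he hp hpy hp' hpy'
    cases v' with
    | nil => simpa [subw] using he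
    | cons c vt =>
      exfalso
      apply noTF_prefix_blk l m n h hl hn hpy
      have hpe : p = blk l m n h c ++ (subw l m n h vt ++ p') := by
        simpa [subw_nil, subw_cons, List.append_assoc] using he
      rw [hpe]
      exact chunk_append_tf (chunk_blk l m n h hl hn c)
        (head?_subw_app l m n h hm hp' hpy')
  | cons c vt ih =>
    intro v' p p' y y' he hp hpy hp' hpy'
    cases v' with
    | nil =>
      exfalso
      apply noTF_prefix_blk l m n h hl hn hpy'
      have hpe : p' = blk l m n h c ++ (subw l m n h vt ++ p) := by
        simpa [subw_nil, subw_cons, List.append_assoc] using he.symm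
      rw [hpe]
      exact chunk_append_tf (chunk_blk l m n h hl hn c)
        (head?_subw_app l m n h hm hp hpy)
    | cons c' vt' =>
      rw [subw_cons, subw_cons, List.append_assoc, List.append_assoc] at he
      obtain ⟨hb, ht⟩ := cancel (chunk_blk l m n h hl hn c) (chunk_blk l m n h hl hn c') he
        (head?_subw_app l m n h hm hp hpy) (head?_subw_app l m n h hm hp' hpy')
      have hcc : c = c' := blk_eq_blk l m n h hlm hmn hb
      subst hcc
      obtain ⟨h1, h2⟩ := ih vt' p p' y y' ht hp hpy hp' hpy'
      exact ⟨by rw [h1], h2⟩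

lemma uniq_full (hl : 0 < l h) (hlm : l h < m h) (hmn : m h < n h)
    {s v p s' v' p' : List Bool} {x x' y y' : Bool}
    (hs : s ≠ []) (hsx : s <:+ blk l m n h x)
    (hp : p ≠ []) (hpy : p <+: blk l m n h y)
    (hs' : s' ≠ []) (hsx' : s' <:+ blk l m n h x')
    (hp' : p' ≠ []) (hpy' : p' <+: blk l m n h y')
    (he : s ++ subw l m n h v ++ p = s' ++ subw l m n h v' ++ p') :
    s = s' ∧ v = v' ∧ p = p' := by
  have hm : 0 < m h := hl.trans hlm
  have hn : 0 < n h := hm.trans hmn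
  rw [List.append_assoc, List.append_assoc] at he
  obtain ⟨h1, h2⟩ := cancel (chunk_suffix (chunk_blk l m n h hl hn x) hsx hs)
    (chunk_suffix (chunk_blk l m n h hl hn x') hsx' hs') he
    (head?_subw_app l m n h hm hp hpy) (head?_subw_app l m n h hm hp' hpy')
  obtain ⟨h3, h4⟩ := uniq2 l m n h hl hlm hmn v v' p p' y y' h2 hp hpy hp' hpy'
  exact ⟨h1, h3, h4⟩

lemma pref_dec :
    ∀ V b : List Bool, b <+: subw l m n h V → b ≠ [] →
      ∃ (v : List Bool) (y : Bool) (p : List Bool),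
        (v ++ [y]) <+: V ∧ p ≠ [] ∧ p <+: blk l m n h y ∧ b = subw l m n h v ++ p := by
  intro V
  induction V with
  | nil =>
    intro b hb hbne
    exact absurd (List.prefix_nil.mp (by simpa [subw] using hb)) hbne
  | cons c V' ih =>
    intro b hb hbne
    rw [subw_cons] at hb
    rcases le_or_gt b.length (blk l m n h c).length with hle | hlt
    · have hbc : b <+: blk l m n h c :=
        List.prefix_of_prefix_length_le hb (List.prefix_append _ _) hle
      exact ⟨[], c, b, by simp, hbne, hbc, by simp [subw]⟩
    · have hblkb : blk l m n h c <+: b :=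
        List.prefix_of_prefix_length_le (List.prefix_append _ _) hb (le_of_lt hlt)
      obtain ⟨b', rfl⟩ := hblkb
      have hb' : b' <+: subw l m n h V' := by
        obtain ⟨t, ht⟩ := hb
        rw [List.append_assoc] at ht
        exact ⟨t, List.append_cancel_left ht⟩
      have hb'ne : b' ≠ [] := by
        intro hnil
        rw [hnil] at hlt
        simp at hlt
      obtain ⟨v, y, p, h1, h2, h3, h4⟩ := ih b' hb' hb'ne
      exact ⟨c :: v, y, p, List.cons_prefix_cons.mpr ⟨rfl, h1⟩, h2, h3,
        by rw [subw_cons, h4, List.append_assoc]⟩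

lemma infix_append_split {w A B : List Bool} (hw : w <:+: A ++ B) :
    w <:+: A ∨ w <:+: B ∨
      ∃ a b : List Bool, a ≠ [] ∧ b ≠ [] ∧ a <:+ A ∧ b <+: B ∧ w = a ++ b := by
  obtain ⟨s, t, hst⟩ := hw
  have hlen : s.length + w.length + t.length = A.length + B.length := by
    have := congrArg List.length hst; simp at this; omega
  rcases le_or_gt (s.length + w.length) A.length with h1 | h1
  · left
    have hsw : s ++ w <+: A :=
      List.prefix_of_prefix_length_le ⟨t, by simpa [List.append_assoc] using hst⟩
        (List.prefix_append A B) (by simpa using h1)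
    exact (List.suffix_append s w).isInfix.trans hsw.isInfix
  · rcases le_or_gt A.length s.length with h2 | h2
    · right; left
      have hwt : w ++ t <:+ B :=
        List.suffix_of_suffix_length_le ⟨s, by simpa [List.append_assoc] using hst⟩
          (List.suffix_append A B) (by simp; omega)
      exact (List.prefix_append w t).isInfix.trans hwt.isInfix
    · right; right
      have hw2 : w ++ t = List.drop s.length (A ++ B) := by
        rw [← hst, List.append_assoc]
        exact (List.drop_left (l₁ := s) (l₂ := w ++ t)).symm
      have hw3 : w = List.take w.length (List.drop s.length (A ++ B)) := by
        rw [← hw2, List.take_left]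
      rw [List.drop_append, Nat.sub_eq_zero_of_le (le_of_lt h2),
        List.drop_zero, List.take_append] at hw3
      have hdl : (List.drop s.length A).length = A.length - s.length := by simp
      have htk : List.take w.length (List.drop s.length A) = List.drop s.length A := by
        apply List.take_of_length_le
        rw [hdl]; omega
      rw [htk, hdl] at hw3
      refine ⟨List.drop s.length A, List.take (w.length - (A.length - s.length)) B,
        ?_, ?_, List.drop_suffix _ _, List.take_prefix _ _, hw3⟩
      · have : (List.drop s.length A).length ≠ 0 := by rw [hdl]; omega
        exact fun hnil => this (by rw [hnil]; rfl)
      · have hBpos : 0 < B.length := by omega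
        have hlen2 : (List.take (w.length - (A.length - s.length)) B).length
            = min (w.length - (A.length - s.length)) B.length := by simp
        intro hnil
        rw [hnil] at hlen2
        simp only [List.length_nil] at hlen2
        rcases Nat.min_eq_zero_iff.mp hlen2.symm with h' | h' <;> omega

lemma exist_dec (hl : 0 < l h) (hn : 0 < n h) :
    ∀ V w : List Bool, w <:+: subw l m n h V → [true, false] <:+: w →
      ∃ (x : Bool) (v : List Bool) (y : Bool) (s p : List Bool),
        (x :: (v ++ [y])) <:+: V ∧ s ≠ [] ∧ s <:+ blk l m n h x ∧
        p ≠ [] ∧ p <+: blk l m n h y ∧ w = s ++ subw l m n h v ++ p := by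
  intro V
  induction V with
  | nil =>
    intro w hw htf
    have hwn : w = [] := by
      have h0 : w <:+: ([] : List Bool) := by simpa [subw] using hw
      simpa using h0
    rw [hwn] at htf
    simp at htf
  | cons c V' ih =>
    intro w hw htf
    rw [subw_cons] at hw
    rcases infix_append_split hw with h1 | h1 | ⟨a, b, hane, hbne, ha, hb, rfl⟩
    · exact absurd (htf.trans h1) (noTF_chunk (chunk_blk l m n h hl hn c))
    · obtain ⟨x, v, y, s, p, hf, rest⟩ := ih w h1 htf
      exact ⟨x, v, y, s, p, List.infix_cons hf, rest⟩
    · obtain ⟨v, y, p, h1, h2, h3, h4⟩ := pref_dec l m n h V' b hb hbne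
      refine ⟨c, v, y, a, p, ?_, hane, ha, h2, h3, by rw [h4, List.append_assoc]⟩
      exact (List.cons_prefix_cons.mpr ⟨rfl, h1⟩).isInfix

-- plumbing with limWord

lemma subw_prefix {u v : List Bool} (huv : u <+: v) :
    subw l m n h u <+: subw l m n h v := by
  obtain ⟨t, rfl⟩ := huv
  exact ⟨subw l m n h t, (subw_append l m n h u t).symm⟩

lemma wordIter_prefix_succ (hm0 : ∀ i, 0 < m i) : ∀ (i hh : ℕ),
    wordIter l m n i hh <+: wordIter l m n (i + 1) hh := by
  intro i
  induction i with
  | zero =>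
    intro hh
    show [false] <+: subw l m n hh [false]
    rw [subw_singleton]
    obtain ⟨k, hk⟩ : ∃ k, m hh = k + 1 := ⟨m hh - 1, by have := hm0 hh; omega⟩
    simp [blk, hk, List.replicate_succ]
  | succ i ihi =>
    intro hh
    exact subw_prefix l m n hh (ihi (hh + 1))

lemma wordIter_prefix_le (hm0 : ∀ i, 0 < m i) {i j hh : ℕ} (hij : i ≤ j) :
    wordIter l m n i hh <+: wordIter l m n j hh := by
  induction j with
  | zero => rw [Nat.le_zero.mp hij]
  | succ j ihj =>
    rcases Nat.lt_or_ge i (j + 1) with hlt | hge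
    · exact (ihj (by omega)).trans (wordIter_prefix_succ l m n hm0 j hh)
    · rw [Nat.le_antisymm hij hge]

lemma length_subw_ge (hm0 : ∀ i, 0 < m i) (hl0 : ∀ i, 0 < l i) (hn0 : ∀ i, 0 < n i) (hh : ℕ) (w : List Bool) : 2 * w.length ≤ (subw l m n hh w).length := by
  induction w with
  | nil => simp [subw]
  | cons c w' ihw =>
    rw [subw_cons, List.length_append]
    have : 2 ≤ (blk l m n hh c).length := by
      have h1 := hm0 hh; have h2 := hl0 hh; have h3 := hn0 hh
      cases c <;> simp [blk] <;> omega
    simp only [List.length_cons]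
    omega

lemma wordIter_length (hm0 : ∀ i, 0 < m i) (hl0 : ∀ i, 0 < l i) (hn0 : ∀ i, 0 < n i) :
    ∀ (i hh : ℕ), i + 1 ≤ (wordIter l m n i hh).length := by
  intro i
  induction i with
  | zero => intro hh; simp [wordIter]
  | succ i ihi =>
    intro hh
    have h1 := length_subw_ge l m n hm0 hl0 hn0 (hh) (wordIter l m n i (hh + 1))
    have h2 := ihi (hh + 1)
    show i + 1 + 1 ≤ (subw l m n hh (wordIter l m n i (hh + 1))).length
    omega

lemma getD_prefix {A B : List Bool} (hAB : A <+: B) {k : ℕ} (hk : k < A.length) :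
    A.getD k false = B.getD k false := by
  obtain ⟨t, rfl⟩ := hAB
  exact (List.getD_append _ _ _ _ hk).symm

lemma limWord_getD (hm0 : ∀ i, 0 < m i) (hl0 : ∀ i, 0 < l i) (hn0 : ∀ i, 0 < n i)
    {i hh k : ℕ} (hk : k < (wordIter l m n i hh).length) :
    limWord l m n hh k = (wordIter l m n i hh).getD k false := by
  unfold limWord
  rcases le_total i (k + 1) with hik | hik
  · exact (getD_prefix (wordIter_prefix_le l m n hm0 hik) hk).symm
  · exact getD_prefix (wordIter_prefix_le l m n hm0 hik)
      (lt_of_lt_of_le (by omega) (wordIter_length l m n hm0 hl0 hn0 (k + 1) hh))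

lemma isFactor_of_infix (hm0 : ∀ i, 0 < m i) (hl0 : ∀ i, 0 < l i) (hn0 : ∀ i, 0 < n i)
    {i hh : ℕ} {u : List Bool}
    (hu : u <:+: wordIter l m n i hh) : IsFactor (limWord l m n hh) u := by
  obtain ⟨s, t, hst⟩ := hu
  refine ⟨s.length, ?_⟩
  have hlen : s.length + u.length + t.length = (wordIter l m n i hh).length := by
    have := congrArg List.length hst; simp at this; omega
  apply List.ext_getElem (by simp)
  intro j hj hj2
  simp only [List.getElem_map, List.getElem_range]
  have hjl : s.length + j < (wordIter l m n i hh).length := by omega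
  rw [limWord_getD l m n hm0 hl0 hn0 hjl, ← hst]
  rw [List.getD_append _ _ _ _ (by simp; omega), List.getD_append_right _ _ _ _ (by omega)]
  simp only [Nat.add_sub_cancel_left]
  exact (List.getD_eq_getElem _ _ (by omega)).symm

lemma infix_wordIter_of_factor (hm0 : ∀ i, 0 < m i) (hl0 : ∀ i, 0 < l i)
    (hn0 : ∀ i, 0 < n i) {hh : ℕ} {w : List Bool}
    (hw : IsFactor (limWord l m n hh) w) :
    ∃ i, w <:+: wordIter l m n i hh := by
  obtain ⟨k, hk⟩ := hw
  refine ⟨k + w.length, ?_⟩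
  have hVl : k + w.length < (wordIter l m n (k + w.length) hh).length :=
    lt_of_lt_of_le (by omega) (wordIter_length l m n hm0 hl0 hn0 (k + w.length) hh)
  have hweq : w = List.take w.length (List.drop k (wordIter l m n (k + w.length) hh)) := by
    apply List.ext_getElem (by simp; omega)
    intro j hj hj2
    rw [List.getElem_take, List.getElem_drop]
    have hkj : k + j < (wordIter l m n (k + w.length) hh).length := by omega
    have h2 : (wordIter l m n (k + w.length) hh)[k + j] =
        (wordIter l m n (k + w.length) hh).getD (k + j) false :=
      (List.getD_eq_getElem _ _ hkj).symm
    have h1 : w[j] = w.getD j false := (List.getD_eq_getElem _ _ hj).symm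
    rw [h1, h2, ← limWord_getD l m n hm0 hl0 hn0 hkj]
    conv_lhs => rw [hk]
    simp [List.getD_eq_getElem?_getD, List.getElem?_map, List.getElem?_range, hj]
  have hfin : List.take w.length (List.drop k (wordIter l m n (k + w.length) hh)) <:+:
      wordIter l m n (k + w.length) hh :=
    (List.take_prefix _ _).isInfix.trans
      (List.drop_suffix k (wordIter l m n (k + w.length) hh)).isInfix
  rwa [← hweq] at hfin

end S15

theorem stmt15 (l m n : ℕ → ℕ) (hlpos : ∀ i, 0 < l i)
    (hlm : ∀ i, l i < m i) (hmn : ∀ i, m i < n i) (h : ℕ) (w : List Bool)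
    (hw : IsFactor (limWord l m n h) w) (hlong : [true, false] <:+: w) :
    ∃! t : List Bool × List Bool × List Bool,
      ∃ x y : Bool,
        t.1 ≠ [] ∧ t.1 <:+ subw l m n h [x] ∧
        t.2.2 ≠ [] ∧ t.2.2 <+: subw l m n h [y] ∧
        IsFactor (limWord l m n (h + 1)) (x :: t.2.1 ++ [y]) ∧
        w = t.1 ++ subw l m n h t.2.1 ++ t.2.2 := by
  have hm0 : ∀ i, 0 < m i := fun i => (hlpos i).trans (hlm i)
  have hn0 : ∀ i, 0 < n i := fun i => (hm0 i).trans (hmn i)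
  obtain ⟨i, hwi⟩ := S15.infix_wordIter_of_factor l m n hm0 hlpos hn0 hw
  have hwi' : w <:+: subw l m n h (wordIter l m n i (h + 1)) :=
    hwi.trans (S15.wordIter_prefix_succ l m n hm0 i h).isInfix
  obtain ⟨x, v, y, s, p, hfac, hs, hsx, hp, hpy, hdecomp⟩ :=
    S15.exist_dec l m n h (hlpos h) (hn0 h) (wordIter l m n i (h + 1)) w hwi' hlong
  refine ⟨(s, v, p), ⟨x, y, hs, by rwa [S15.subw_singleton], hp,
    by rwa [S15.subw_singleton], ?_, hdecomp⟩, ?_⟩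
  · exact S15.isFactor_of_infix l m n hm0 hlpos hn0
      (by simpa using hfac)
  · rintro ⟨s', v', p'⟩ ⟨x', y', hs', hsx', hp', hpy', hfac', hdec'⟩
    rw [S15.subw_singleton] at hsx' hpy'
    obtain ⟨e1, e2, e3⟩ := S15.uniq_full l m n h (hlpos h) (hlm h) (hmn h)
      hs' hsx' hp' hpy' hs hsx hp hpy (hdec'.symm.trans hdecomp)
    simp only [Prod.mk.injEq]
    exact ⟨e1, e2, e3⟩
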